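/- Let α < 1 and set A_n = (1/n!)·∏_{k=2}^{n} (k − 2α) for n ≥ 1 (so A_1 = 1). Suppose g ∈ P has Taylor coefficients p_j and the complex numbers a_n (n ≥ 2) satisfy a_n = (A_n/2)·p_{n−1} (this holds for the Taylor coefficients of every f in the closed convex hull of the class C(α) of convex functions of order α, via its Herglotz representation). Then for all m, n ≥ 2: |a_m·a_n/(A_m·A_n) − a_{m+n−1}/A_{m+n−1}| + |a_m·a_n|/(A_m·A_n) ≤ 1. -/

import Mathlib

open Complex MeasureTheory intervalIntegral Real Filter Topology
noncomputable def es (s : ℤ) (θ : ℝ) : ℂ := Complex.exp (s * θ * Complex.I)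

lemma es_mul (s t : ℤ) (θ : ℝ) : es s θ * es t θ = es (s + t) θ := by
  rw [es, es, es, ← Complex.exp_add]; push_cast; ring_nf

lemma es_conj (s : ℤ) (θ : ℝ) : (starRingEnd ℂ) (es s θ) = es (-s) θ := by
  rw [es, es, ← Complex.exp_conj]; push_cast; simp

lemma es_norm (s : ℤ) (θ : ℝ) : ‖es s θ‖ = 1 := by
  simp [es, Complex.norm_exp]

lemma es_continuous (s : ℤ) : Continuous (es s) := by
  fun_prop [es]

lemma integral_es (s : ℤ) (hs : s ≠ 0) : ∫ θ in (0:ℝ)..(2*π), es s θ = 0 := by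
  have h : ∀ θ : ℝ, es s θ = Complex.exp ((s * Complex.I) * θ) := by
    intro θ; rw [es]; ring_nf
  have h1 : Complex.exp ((s:ℂ) * Complex.I * (2*π)) = 1 := by
    rw [show (s:ℂ) * Complex.I * (2*(π:ℝ)) = s * (2*(π:ℝ)*Complex.I) by ring]
    exact Complex.exp_int_mul_two_pi_mul_I s
  simp only [h]
  rw [integral_exp_mul_complex (by simp [Complex.ext_iff, hs])]
  simp [h1]

lemma integral_es_zero : ∫ θ in (0:ℝ)..(2*π), es 0 θ = 2*π := by
  simp [es]

lemma summable_aux (p : ℕ → ℂ) (g : ℂ → ℂ)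
    (hsum : ∀ z ∈ Metric.ball (0:ℂ) 1, HasSum (fun n : ℕ => p n * z^n) (g z))
    {r : ℝ} (hr0 : 0 ≤ r) (hr1 : r < 1) :
    Summable (fun n : ℕ => ‖p n‖ * r^n) := by
  set r' : ℝ := (1+r)/2 with hr'def
  have hr'0 : 0 < r' := by positivity
  have hrr' : r < r' := by rw [hr'def]; linarith
  have hr'1 : r' < 1 := by rw [hr'def]; linarith
  have hz : ((r':ℝ) : ℂ) ∈ Metric.ball (0:ℂ) 1 := by
    simp only [Metric.mem_ball, dist_zero_right, Complex.norm_real, Real.norm_of_nonneg hr'0.le]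
    exact hr'1
  have hS := (hsum _ hz).summable
  have ht : CauchySeq (fun n : ℕ => p n * ((r':ℝ):ℂ)^n) :=
    (hS.tendsto_atTop_zero).cauchySeq
  obtain ⟨C, hC⟩ := ht.isBounded_range.exists_norm_le
  have hCn : ∀ n : ℕ, ‖p n‖ * r'^n ≤ C := by
    intro n
    have := hC _ (Set.mem_range_self n)
    rwa [norm_mul, norm_pow, Complex.norm_real, Real.norm_of_nonneg hr'0.le] at this
  have hgeom : Summable (fun n : ℕ => C * (r/r')^n) :=
    (summable_geometric_of_lt_one (by positivity) ((div_lt_one hr'0).2 hrr')).mul_left C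
  refine Summable.of_nonneg_of_le (fun n => by positivity) (fun n => ?_) hgeom
  have h1 : ‖p n‖ * r^n = (‖p n‖ * r'^n) * (r/r')^n := by
    have : r'^n ≠ 0 := by positivity
    rw [mul_assoc, ← mul_pow, mul_div_cancel₀ r hr'0.ne']
  rw [h1]
  exact mul_le_mul_of_nonneg_right (hCn n) (by positivity)

lemma es_pow (s : ℤ) (n : ℕ) (θ : ℝ) : (es s θ)^n = es (n * s) θ := by
  rw [es, es, ← Complex.exp_nat_mul]; push_cast; ring_nf

lemma intervalIntegral_conj {f : ℝ → ℂ} {a b : ℝ} :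
    ∫ x in a..b, (starRingEnd ℂ) (f x) = (starRingEnd ℂ) (∫ x in a..b, f x) := by
  simp [intervalIntegral, integral_conj]

section
variable {g : ℂ → ℂ} {p : ℕ → ℂ} {r : ℝ}

lemma mem_ball_aux (hr0 : 0 ≤ r) (hr1 : r < 1) (θ : ℝ) :
    (r:ℂ) * es 1 θ ∈ Metric.ball (0:ℂ) 1 := by
  simp only [Metric.mem_ball, dist_zero_right, norm_mul, es_norm, Complex.norm_real,
    Real.norm_of_nonneg hr0, mul_one]
  exact hr1

lemma cont_aux (hsum : ∀ z ∈ Metric.ball (0:ℂ) 1, HasSum (fun n : ℕ => p n * z^n) (g z))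
    (hr0 : 0 ≤ r) (hr1 : r < 1) :
    Continuous (fun θ : ℝ => g ((r:ℂ) * es 1 θ)) := by
  have heq : (fun θ : ℝ => g ((r:ℂ) * es 1 θ))
      = fun θ : ℝ => ∑' n : ℕ, p n * ((r:ℂ) * es 1 θ)^n :=
    funext fun θ => ((hsum _ (mem_ball_aux hr0 hr1 θ)).tsum_eq).symm
  rw [heq]
  apply continuous_tsum (u := fun n => ‖p n‖ * r^n)
  · intro n; exact (continuous_const.mul (((continuous_const.mul (es_continuous 1)).pow n)))
  · exact summable_aux p g hsum hr0 hr1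
  · intro n θ
    rw [norm_mul, norm_pow, norm_mul, es_norm, Complex.norm_real,
      Real.norm_of_nonneg hr0, mul_one]

lemma swap_aux (hsum : ∀ z ∈ Metric.ball (0:ℂ) 1, HasSum (fun n : ℕ => p n * z^n) (g z))
    (hr0 : 0 ≤ r) (hr1 : r < 1) (s : ℤ) :
    HasSum (fun n : ℕ => p n * (r:ℂ)^n * ∫ θ in (0:ℝ)..(2*π), es (n + s) θ)
      (∫ θ in (0:ℝ)..(2*π), g ((r:ℂ) * es 1 θ) * es s θ) := by
  have h2π : (0:ℝ) ≤ 2*π := by positivity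
  have hpt : ∀ θ : ℝ, HasSum (fun n : ℕ => p n * (r:ℂ)^n * es (n + s) θ)
      (g ((r:ℂ) * es 1 θ) * es s θ) := by
    intro θ
    have := (hsum _ (mem_ball_aux hr0 hr1 θ)).mul_right (es s θ)
    have hf : (fun n : ℕ => p n * (r:ℂ)^n * es (n + s) θ)
        = fun i : ℕ => p i * ((r:ℂ) * es 1 θ)^i * es s θ := by
      funext n
      rw [mul_pow, es_pow 1 n θ, mul_one, ← es_mul]
      ring
    rw [hf]; exact this
  have key : HasSum (fun n : ℕ => ∫ θ in Set.Ioc (0:ℝ) (2*π), p n * (r:ℂ)^n * es (n + s) θ)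
      (∫ θ in Set.Ioc (0:ℝ) (2*π), g ((r:ℂ) * es 1 θ) * es s θ) := by
    have hint : ∀ n : ℕ, IntegrableOn (fun θ : ℝ => p n * (r:ℂ)^n * es (n + s) θ)
        (Set.Ioc (0:ℝ) (2*π)) := fun n =>
      (continuous_const.mul (es_continuous _)).integrableOn_Ioc
    have hnorm : Summable (fun n : ℕ =>
        ∫ θ in Set.Ioc (0:ℝ) (2*π), ‖p n * (r:ℂ)^n * es (n + s) θ‖) := by
      have : ∀ n : ℕ, (∫ θ in Set.Ioc (0:ℝ) (2*π), ‖p n * (r:ℂ)^n * es (n + s) θ‖)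
          = (2*π) * (‖p n‖ * r^n) := by
        intro n
        have : ∀ θ : ℝ, ‖p n * (r:ℂ)^n * es (n + s) θ‖ = ‖p n‖ * r^n := by
          intro θ
          rw [norm_mul, norm_mul, es_norm, norm_pow, Complex.norm_real,
            Real.norm_of_nonneg hr0, mul_one]
        simp only [this, setIntegral_const, Real.volume_Ioc, smul_eq_mul]
        rw [measureReal_def, Real.volume_Ioc, ENNReal.toReal_ofReal (by linarith)]
        ring_nf
      rw [funext this]
      exact (summable_aux p g hsum hr0 hr1).mul_left _
    have := hasSum_integral_of_summable_integral_norm (μ := volume.restrict (Set.Ioc (0:ℝ) (2*π))) hint hnorm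
    have heq : Set.EqOn (fun θ : ℝ => g ((r:ℂ) * es 1 θ) * es s θ)
        (fun θ : ℝ => ∑' n : ℕ, p n * (r:ℂ)^n * es (n + s) θ) (Set.Ioc (0:ℝ) (2*π)) :=
      fun θ _ => ((hpt θ).tsum_eq).symm
    rw [setIntegral_congr_fun measurableSet_Ioc heq]
    exact this
  rw [intervalIntegral.integral_of_le h2π]
  convert key using 2 with n
  rw [intervalIntegral.integral_of_le h2π, MeasureTheory.integral_const_mul]
end

section
variable {g : ℂ → ℂ} {p : ℕ → ℂ} {r : ℝ}
variable (hsum : ∀ z ∈ Metric.ball (0:ℂ) 1, HasSum (fun n : ℕ => p n * z^n) (g z))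
variable (hr0 : 0 ≤ r) (hr1 : r < 1)
include hsum hr0 hr1

lemma momentF_neg (j : ℕ) :
    ∫ θ in (0:ℝ)..(2*π), g ((r:ℂ) * es 1 θ) * es (-(j:ℤ)) θ = 2*π*(p j * (r:ℂ)^j) := by
  have h := swap_aux hsum hr0 hr1 (-(j:ℤ))
  have h2 : HasSum (fun n : ℕ => p n * (r:ℂ)^n * ∫ θ in (0:ℝ)..(2*π), es (n + -(j:ℤ)) θ)
      (p j * (r:ℂ)^j * ∫ θ in (0:ℝ)..(2*π), es ((j:ℤ) + -(j:ℤ)) θ) :=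
    hasSum_single (f := fun n : ℕ => p n * (r:ℂ)^n * ∫ θ in (0:ℝ)..(2*π), es (n + -(j:ℤ)) θ) j
      (fun n hn => by
        have h0 : ((n:ℤ) + -(j:ℤ)) ≠ 0 := by omega
        simp [integral_es _ h0])
  rw [h.unique h2, show ((j:ℤ) + -(j:ℤ)) = 0 by ring, integral_es_zero]
  ring

lemma momentF_pos (j : ℕ) (hj : 1 ≤ j) :
    ∫ θ in (0:ℝ)..(2*π), g ((r:ℂ) * es 1 θ) * es (j:ℤ) θ = 0 := by
  have h := swap_aux hsum hr0 hr1 (j:ℤ)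
  have h2 : HasSum (fun n : ℕ => p n * (r:ℂ)^n * ∫ θ in (0:ℝ)..(2*π), es (n + (j:ℤ)) θ)
      0 := by
    have : (fun n : ℕ => p n * (r:ℂ)^n * ∫ θ in (0:ℝ)..(2*π), es (n + (j:ℤ)) θ)
        = fun _ => (0:ℂ) := by
      funext n
      rw [integral_es _ (by omega), mul_zero]
    rw [this]
    exact hasSum_zero
  exact h.unique h2

lemma momentR_eq (s : ℤ) :
    ∫ θ in (0:ℝ)..(2*π), ((g ((r:ℂ) * es 1 θ)).re : ℂ) * es s θ
      = ((∫ θ in (0:ℝ)..(2*π), g ((r:ℂ) * es 1 θ) * es s θ)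
        + (starRingEnd ℂ) (∫ θ in (0:ℝ)..(2*π), g ((r:ℂ) * es 1 θ) * es (-s) θ)) / 2 := by
  have hc := cont_aux hsum hr0 hr1
  have hpt : ∀ θ : ℝ, ((g ((r:ℂ) * es 1 θ)).re : ℂ) * es s θ
      = (g ((r:ℂ) * es 1 θ) * es s θ + (starRingEnd ℂ) (g ((r:ℂ) * es 1 θ) * es (-s) θ)) / 2 := by
    intro θ
    rw [map_mul, es_conj, neg_neg, ← add_mul, Complex.add_conj]
    push_cast
    ring
  rw [intervalIntegral.integral_congr (fun θ _ => hpt θ)]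
  rw [intervalIntegral.integral_div,
    intervalIntegral.integral_add ((show Continuous fun θ : ℝ => g ((r:ℂ) * es 1 θ) * es s θ from hc.mul (es_continuous s)).intervalIntegrable _ _)
      ((show Continuous fun θ : ℝ => (starRingEnd ℂ) (g ((r:ℂ) * es 1 θ) * es (-s) θ) from
        Complex.continuous_conj.comp (hc.mul (es_continuous (-s)))).intervalIntegrable _ _),
    intervalIntegral_conj]

end

section
variable {g : ℂ → ℂ} {p : ℕ → ℂ} {r : ℝ}
variable (hsum : ∀ z ∈ Metric.ball (0:ℂ) 1, HasSum (fun n : ℕ => p n * z^n) (g z))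
variable (hr0 : 0 ≤ r) (hr1 : r < 1)
include hsum hr0 hr1

lemma momentR_neg (j : ℕ) (hj : 1 ≤ j) :
    ∫ θ in (0:ℝ)..(2*π), ((g ((r:ℂ) * es 1 θ)).re : ℂ) * es (-(j:ℤ)) θ
      = π * (p j * (r:ℂ)^j) := by
  rw [momentR_eq hsum hr0 hr1, neg_neg, momentF_neg hsum hr0 hr1 j,
    momentF_pos hsum hr0 hr1 j hj, map_zero]
  ring

lemma momentR_pos (j : ℕ) (hj : 1 ≤ j) :
    ∫ θ in (0:ℝ)..(2*π), ((g ((r:ℂ) * es 1 θ)).re : ℂ) * es (j:ℤ) θ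
      = π * (starRingEnd ℂ) (p j * (r:ℂ)^j) := by
  rw [momentR_eq hsum hr0 hr1, momentF_pos hsum hr0 hr1 j hj, momentF_neg hsum hr0 hr1 j]
  rw [map_mul, map_mul]
  simp only [Complex.conj_ofReal, map_ofNat]
  ring

lemma momentR_zero (hp0 : p 0 = 1) :
    ∫ θ in (0:ℝ)..(2*π), ((g ((r:ℂ) * es 1 θ)).re : ℂ) = 2*π := by
  have h := momentR_eq hsum hr0 hr1 (s := 0)
  have h0 : ∀ θ : ℝ, es 0 θ = 1 := fun θ => by simp [es]
  simp only [neg_zero, h0, mul_one] at h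
  have hF0 := momentF_neg hsum hr0 hr1 0
  simp only [Nat.cast_zero, neg_zero, h0, mul_one, hp0, pow_zero] at hF0
  rw [h, hF0]
  simp only [map_mul, Complex.conj_ofReal, map_ofNat]
  ring
end

section
variable {g : ℂ → ℂ} {p : ℕ → ℂ} {r : ℝ}

lemma quad_aux (hp0 : p 0 = 1)
    (hsum : ∀ z ∈ Metric.ball (0:ℂ) 1, HasSum (fun n : ℕ => p n * z^n) (g z))
    (hre : ∀ z ∈ Metric.ball (0:ℂ) 1, 0 < (g z).re)
    (hr0 : 0 ≤ r) (hr1 : r < 1)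
    (k l : ℕ) (hk : 1 ≤ k) (hl : 1 ≤ l) (c : ℂ) :
    0 ≤ ((1 - (p k * (r:ℂ)^k/2) * (starRingEnd ℂ) (p k * (r:ℂ)^k/2))
        - (starRingEnd ℂ) c * ((p (k+l) * (r:ℂ)^(k+l)/2) - (p k * (r:ℂ)^k/2) * (p l * (r:ℂ)^l/2))
        - c * (starRingEnd ℂ) ((p (k+l) * (r:ℂ)^(k+l)/2) - (p k * (r:ℂ)^k/2) * (p l * (r:ℂ)^l/2))
        + c * (starRingEnd ℂ) c * (1 - (p l * (r:ℂ)^l/2) * (starRingEnd ℂ) (p l * (r:ℂ)^l/2))).re := by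
  have h2π : (0:ℝ) < 2*π := by positivity
  have hc := cont_aux hsum hr0 hr1
  have hρcont : Continuous (fun θ : ℝ => ((g ((r:ℂ)*es 1 θ)).re : ℂ)) :=
    Complex.continuous_ofReal.comp (Complex.continuous_re.comp hc)
  set u : ℂ := p k * (r:ℂ)^k/2 with hu
  set v : ℂ := p l * (r:ℂ)^l/2 with hv
  set w : ℂ := p (k+l) * (r:ℂ)^(k+l)/2 with hw
  set d : ℂ := -u + c * (starRingEnd ℂ) v with hd
  have hI0 := momentR_zero hsum hr0 hr1 hp0
  have hIk := momentR_neg hsum hr0 hr1 k hk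
  have hIk' := momentR_pos hsum hr0 hr1 k hk
  have hIl := momentR_neg hsum hr0 hr1 l hl
  have hIl' := momentR_pos hsum hr0 hr1 l hl
  have hIkl := momentR_neg hsum hr0 hr1 (k+l) (le_trans hk (Nat.le_add_right _ _))
  have hIkl' := momentR_pos hsum hr0 hr1 (k+l) (le_trans hk (Nat.le_add_right _ _))
  set P : ℝ → ℂ := fun θ => es (-(k:ℤ)) θ - u - c * (es ((l:ℤ)) θ - (starRingEnd ℂ) v) with hP
  have hnn : 0 ≤ ∫ θ in (0:ℝ)..(2*π), Complex.normSq (P θ) * (g ((r:ℂ)*es 1 θ)).re := by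
    apply intervalIntegral.integral_nonneg h2π.le
    intro θ _
    exact mul_nonneg (Complex.normSq_nonneg _) (hre _ (mem_ball_aux hr0 hr1 θ)).le
  have hofr : (∫ θ in (0:ℝ)..(2*π), P θ * (starRingEnd ℂ) (P θ) * ((g ((r:ℂ)*es 1 θ)).re : ℂ))
      = ((∫ θ in (0:ℝ)..(2*π), Complex.normSq (P θ) * (g ((r:ℂ)*es 1 θ)).re : ℝ) : ℂ) := by
    rw [← intervalIntegral.integral_ofReal]
    apply intervalIntegral.integral_congr
    intro θ _
    simp only [Complex.mul_conj]
    push_cast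
    ring
  have hexp : ∀ θ : ℝ, P θ * (starRingEnd ℂ) (P θ) * ((g ((r:ℂ)*es 1 θ)).re : ℂ)
      = (1 + c * (starRingEnd ℂ) c + d * (starRingEnd ℂ) d) * ((g ((r:ℂ)*es 1 θ)).re : ℂ)
        + (-(starRingEnd ℂ) c) * (((g ((r:ℂ)*es 1 θ)).re : ℂ) * es (-((k+l : ℕ):ℤ)) θ)
        + (-c) * (((g ((r:ℂ)*es 1 θ)).re : ℂ) * es (((k+l : ℕ):ℤ)) θ)
        + ((starRingEnd ℂ) d) * (((g ((r:ℂ)*es 1 θ)).re : ℂ) * es (-(k:ℤ)) θ)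
        + d * (((g ((r:ℂ)*es 1 θ)).re : ℂ) * es ((k:ℤ)) θ)
        + (-(c * (starRingEnd ℂ) d)) * (((g ((r:ℂ)*es 1 θ)).re : ℂ) * es ((l:ℤ)) θ)
        + (-((starRingEnd ℂ) c * d)) * (((g ((r:ℂ)*es 1 θ)).re : ℂ) * es (-(l:ℤ)) θ) := by
    intro θ
    have ha : es (-(k:ℤ)) θ ≠ 0 := Complex.exp_ne_zero _
    have hb : es (-(l:ℤ)) θ ≠ 0 := Complex.exp_ne_zero _
    have ekk : es ((k:ℤ)) θ * es (-(k:ℤ)) θ = 1 := by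
      rw [es_mul, add_neg_cancel]; simp [es]
    have ell : es ((l:ℤ)) θ * es (-(l:ℤ)) θ = 1 := by
      rw [es_mul, add_neg_cancel]; simp [es]
    have ek : es ((k:ℤ)) θ = (es (-(k:ℤ)) θ)⁻¹ := eq_inv_of_mul_eq_one_left ekk
    have el : es ((l:ℤ)) θ = (es (-(l:ℤ)) θ)⁻¹ := eq_inv_of_mul_eq_one_left ell
    have ekl1 : es (-((k+l : ℕ):ℤ)) θ = es (-(k:ℤ)) θ * es (-(l:ℤ)) θ := by
      rw [es_mul]; congr 1 <;> omega
    have ekl2 : es (((k+l : ℕ):ℤ)) θ = es ((k:ℤ)) θ * es ((l:ℤ)) θ := by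
      rw [es_mul]; congr 1 <;> omega
    rw [ekl2]
    simp only [hP, hd]
    simp only [map_sub, map_mul, map_add, map_neg, es_conj, neg_neg, Complex.conj_conj]
    rw [ekl1, ek, el]
    field_simp
    ring
  have i0 : IntervalIntegrable (fun θ : ℝ =>
      (1 + c * (starRingEnd ℂ) c + d * (starRingEnd ℂ) d) * ((g ((r:ℂ)*es 1 θ)).re : ℂ))
      volume 0 (2*π) := (continuous_const.mul hρcont).intervalIntegrable _ _
  have hIa : ∀ (aa : ℂ) (s : ℤ), IntervalIntegrable (fun θ : ℝ =>
      aa * (((g ((r:ℂ)*es 1 θ)).re : ℂ) * es s θ)) volume 0 (2*π) := fun aa s =>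
    (continuous_const.mul (hρcont.mul (es_continuous s))).intervalIntegrable _ _
  have hval : (∫ θ in (0:ℝ)..(2*π), P θ * (starRingEnd ℂ) (P θ) * ((g ((r:ℂ)*es 1 θ)).re : ℂ))
      = ((2*π : ℝ) : ℂ) * ((1 - u * (starRingEnd ℂ) u)
        - (starRingEnd ℂ) c * (w - u*v) - c * (starRingEnd ℂ) (w - u*v)
        + c * (starRingEnd ℂ) c * (1 - v * (starRingEnd ℂ) v)) := by
    rw [intervalIntegral.integral_congr (fun θ _ => hexp θ)]
    rw [intervalIntegral.integral_add (((((i0.add (hIa _ _)).add (hIa _ _)).add (hIa _ _)).add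
      (hIa _ _)).add (hIa _ _)) (hIa _ _),
      intervalIntegral.integral_add ((((i0.add (hIa _ _)).add (hIa _ _)).add (hIa _ _)).add
      (hIa _ _)) (hIa _ _),
      intervalIntegral.integral_add (((i0.add (hIa _ _)).add (hIa _ _)).add (hIa _ _)) (hIa _ _),
      intervalIntegral.integral_add ((i0.add (hIa _ _)).add (hIa _ _)) (hIa _ _),
      intervalIntegral.integral_add (i0.add (hIa _ _)) (hIa _ _),
      intervalIntegral.integral_add i0 (hIa _ _)]
    simp only [intervalIntegral.integral_const_mul]
    rw [hI0, hIk, hIk', hIl, hIl', hIkl, hIkl']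
    rw [hd, hu, hv, hw]
    simp only [map_sub, map_add, map_neg, map_mul, map_div₀, map_pow, map_one, map_ofNat,
      Complex.conj_ofReal, Complex.conj_conj]
    push_cast
    ring
  have h := hval.symm.trans hofr
  have h2 := congrArg Complex.re h
  simp only [Complex.mul_re, Complex.ofReal_re, Complex.ofReal_im, zero_mul, sub_zero] at h2
  nlinarith [hnn, h2π, h2]
end

section
variable {g : ℂ → ℂ} {p : ℕ → ℂ} {r : ℝ}

lemma radius_ineq (hp0 : p 0 = 1)
    (hsum : ∀ z ∈ Metric.ball (0:ℂ) 1, HasSum (fun n : ℕ => p n * z^n) (g z))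
    (hre : ∀ z ∈ Metric.ball (0:ℂ) 1, 0 < (g z).re)
    (hr0 : 0 ≤ r) (hr1 : r < 1)
    (k l : ℕ) (hk : 1 ≤ k) (hl : 1 ≤ l) :
    ‖(p k * (r:ℂ)^k/2) * (p l * (r:ℂ)^l/2) - p (k+l) * (r:ℂ)^(k+l)/2‖
      + ‖p k * (r:ℂ)^k/2‖ * ‖p l * (r:ℂ)^l/2‖ ≤ 1 := by
  set u : ℂ := p k * (r:ℂ)^k/2 with hu
  set v : ℂ := p l * (r:ℂ)^l/2 with hv
  set w : ℂ := p (k+l) * (r:ℂ)^(k+l)/2 with hw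
  set U : ℝ := ‖u‖ with hU
  set V : ℝ := ‖v‖ with hV
  set e : ℝ := ‖w - u*v‖ with he
  have hU0 : 0 ≤ U := norm_nonneg _
  have hV0 : 0 ≤ V := norm_nonneg _
  have he0 : 0 ≤ e := norm_nonneg _
  have huu : u * (starRingEnd ℂ) u = ((U^2 : ℝ) : ℂ) := by
    rw [Complex.mul_conj, hU, Complex.sq_norm]
  have hvv : v * (starRingEnd ℂ) v = ((V^2 : ℝ) : ℂ) := by
    rw [Complex.mul_conj, hV, Complex.sq_norm]
  -- hA : 0 ≤ 1 - U^2 via c = 0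
  have hA : 0 ≤ 1 - U^2 := by
    have h := quad_aux hp0 hsum hre hr0 hr1 k l hk hl 0
    simp only [map_zero, zero_mul, mul_zero, sub_zero, add_zero] at h
    rw [← hu, huu] at h
    simp only [Complex.sub_re, Complex.one_re, Complex.ofReal_re] at h
    linarith
  -- hB : 0 ≤ 1 - V^2 via swapped roles, c = 0
  have hB : 0 ≤ 1 - V^2 := by
    have h := quad_aux hp0 hsum hre hr0 hr1 l k hl hk 0
    simp only [map_zero, zero_mul, mul_zero, sub_zero, add_zero] at h
    rw [← hv, hvv] at h
    simp only [Complex.sub_re, Complex.one_re, Complex.ofReal_re] at h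
    linarith
  -- quadratic in t
  have hquad : ∀ t : ℝ, 0 ≤ (1-V^2) * (t*t) + (-(2*e)) * t + (1-U^2) := by
    intro t
    set φ : ℂ := if hE : w - u*v = 0 then 1 else (w - u*v) / e with hφ
    have hφE : (starRingEnd ℂ) φ * (w - u*v) = ((e:ℝ):ℂ) := by
      by_cases hE : w - u*v = 0
      · simp [hφ, hE, he]
      · have he' : (e:ℝ) ≠ 0 := by
          simp only [he, ne_eq, norm_eq_zero]; exact hE
        rw [hφ]
        simp only [hE, dif_neg, not_false_iff]
        rw [map_div₀, Complex.conj_ofReal, div_mul_eq_mul_div, mul_comm,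
          Complex.mul_conj, Complex.normSq_eq_norm_sq, ← he]
        rw [show ((e^2:ℝ):ℂ) = (e:ℂ) * e by push_cast; ring]
        rw [mul_div_assoc, div_self (by exact_mod_cast he'), mul_one]
    have hφn : φ * (starRingEnd ℂ) φ = 1 := by
      by_cases hE : w - u*v = 0
      · simp [hφ, hE]
      · have he' : e ≠ 0 := by simp only [he, ne_eq, norm_eq_zero]; exact hE
        rw [hφ]
        simp only [hE, dif_neg, not_false_iff]
        rw [map_div₀, Complex.conj_ofReal, div_mul_div_comm, Complex.mul_conj,
          Complex.normSq_eq_norm_sq, ← he]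
        rw [show ((e:ℝ):ℂ) * e = ((e^2:ℝ):ℂ) by push_cast; ring]
        apply div_self
        exact_mod_cast pow_ne_zero 2 he'
    have h := quad_aux hp0 hsum hre hr0 hr1 k l hk hl ((t:ℂ) * φ)
    rw [← hu, ← hv, ← hw, huu, hvv] at h
    have hc1 : (starRingEnd ℂ) ((t:ℂ) * φ) * (w - u*v) = ((t*e : ℝ):ℂ) := by
      rw [map_mul, Complex.conj_ofReal, mul_assoc, hφE]; push_cast; ring
    have hc2 : ((t:ℂ) * φ) * (starRingEnd ℂ) (w - u*v) = ((t*e : ℝ):ℂ) := by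
      have := congrArg (starRingEnd ℂ) hc1
      rw [map_mul, Complex.conj_conj, Complex.conj_ofReal] at this
      exact this
    have hc3 : ((t:ℂ) * φ) * (starRingEnd ℂ) ((t:ℂ) * φ) = ((t*t : ℝ):ℂ) := by
      rw [map_mul, Complex.conj_ofReal]
      rw [show (t:ℂ) * φ * ((t:ℂ) * (starRingEnd ℂ) φ) = (t:ℂ)*(t:ℂ)*(φ * (starRingEnd ℂ) φ) by ring,
        hφn, mul_one]
      norm_cast
    rw [hc1, hc2, hc3] at h
    have hofreal : (1:ℂ) - ((U^2:ℝ):ℂ) - ((t*e:ℝ):ℂ) - ((t*e:ℝ):ℂ) + ((t*t:ℝ):ℂ) * (1 - ((V^2:ℝ):ℂ))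
        = ((((1-V^2) * (t*t) + (-(2*e)) * t + (1-U^2) : ℝ)):ℂ) := by
      push_cast; ring
    rwa [hofreal, Complex.ofReal_re] at h
  -- discriminant
  have hdisc := discrim_le_zero hquad
  rw [discrim] at hdisc
  have he2 : e^2 ≤ (1-U^2) * (1-V^2) := by nlinarith [hdisc]
  -- final алгебра
  have hU1 : U ≤ 1 := by nlinarith
  have hV1 : V ≤ 1 := by nlinarith
  have hUV : U*V ≤ 1 := by nlinarith
  have h6 : e ≤ 1 - U*V := by nlinarith [sq_nonneg (U-V), sq_nonneg (U+V)]
  have heq : ‖u * v - w‖ = e := by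
    rw [he, norm_sub_rev]
  calc ‖u * v - w‖ + U * V = e + U*V := by rw [heq]
    _ ≤ 1 := by linarith

lemma core_ineq (hp0 : p 0 = 1)
    (hsum : ∀ z ∈ Metric.ball (0:ℂ) 1, HasSum (fun n : ℕ => p n * z^n) (g z))
    (hre : ∀ z ∈ Metric.ball (0:ℂ) 1, 0 < (g z).re)
    (k l : ℕ) (hk : 1 ≤ k) (hl : 1 ≤ l) :
    ‖p k * p l / 4 - p (k+l) / 2‖ + ‖p k * p l‖ / 4 ≤ 1 := by
  set L : ℝ := ‖p k * p l / 4 - p (k+l) / 2‖ + ‖p k * p l‖ / 4 with hL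
  have key : ∀ r : ℝ, 0 ≤ r → r < 1 → r^(k+l) * L ≤ 1 := by
    intro r hr0 hr1
    have h := radius_ineq hp0 hsum hre hr0 hr1 k l hk hl
    have h1 : (p k * (r:ℂ)^k/2) * (p l * (r:ℂ)^l/2) - p (k+l) * (r:ℂ)^(k+l)/2
        = ((r:ℂ))^(k+l) * (p k * p l / 4 - p (k+l) / 2) := by
      rw [pow_add]; ring
    have h2 : ‖(p k * (r:ℂ)^k/2) * (p l * (r:ℂ)^l/2) - p (k+l) * (r:ℂ)^(k+l)/2‖
        = r^(k+l) * ‖p k * p l / 4 - p (k+l) / 2‖ := by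
      rw [h1, norm_mul, norm_pow, Complex.norm_real, Real.norm_of_nonneg hr0]
    have h3 : ‖p k * (r:ℂ)^k/2‖ * ‖p l * (r:ℂ)^l/2‖
        = r^(k+l) * (‖p k * p l‖ / 4) := by
      rw [← norm_mul, show (p k * (r:ℂ)^k/2) * (p l * (r:ℂ)^l/2)
          = ((r:ℂ))^(k+l) * (p k * p l / 4) from by rw [pow_add]; ring,
        norm_mul, norm_pow, Complex.norm_real, Real.norm_of_nonneg hr0, norm_div]
      norm_num
    rw [h2, h3] at h
    rw [hL]
    linarith
  have hseq : Filter.Tendsto (fun m : ℕ => ((1:ℝ) - 1/(m+2))^(k+l) * L)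
      Filter.atTop (𝓝 (((1:ℝ))^(k+l) * L)) := by
    apply Filter.Tendsto.mul_const
    apply Filter.Tendsto.pow
    have h0 : Filter.Tendsto (fun m : ℕ => (1:ℝ)/(m+2)) Filter.atTop (𝓝 0) := by
      apply tendsto_one_div_add_atTop_nhds_zero_nat.comp (Filter.tendsto_add_atTop_nat 1) |>.congr
      intro m
      simp only [Function.comp_apply]
      push_cast
      ring_nf
    simpa using tendsto_const_nhds.sub h0
  rw [one_pow, one_mul] at hseq
  refine le_of_tendsto' hseq (fun m => key _ ?_ ?_)
  · have h1 : (1:ℝ)/(m+2) ≤ 1 := by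
      rw [div_le_one (by positivity)]
      linarith [Nat.cast_nonneg (α := ℝ) m]
    linarith
  · have h2 : (0:ℝ) < 1/(m+2) := by positivity
    linarith
end

open Metric

/-- Let `α < 1` and `A n = (1/n!) ∏_{k=2}^n (k - 2α)`. If `g` is in the
Carathéodory class `P` with Taylor coefficients `p`, and the numbers `a n`
satisfy `a n = (A n / 2) * p (n-1)` for `n ≥ 2` (as do the Taylor coefficients
of any `f` in the closed convex hull of `C(α)`), then for all `m, n ≥ 2`:
`|a_m a_n/(A_m A_n) - a_{m+n-1}/A_{m+n-1}| + |a_m a_n|/(A_m A_n) ≤ 1`. -/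
theorem convexHull_convex_order_alpha_ineq (α : ℝ) (hα : α < 1)
    (A : ℕ → ℝ)
    (hA : ∀ n : ℕ, A n = (∏ k ∈ Finset.Icc 2 n, ((k : ℝ) - 2 * α)) / n.factorial)
    (g : ℂ → ℂ) (p : ℕ → ℂ)
    (hp0 : p 0 = 1)
    (hsum : ∀ z ∈ ball (0 : ℂ) 1, HasSum (fun n : ℕ => p n * z ^ n) (g z))
    (hre : ∀ z ∈ ball (0 : ℂ) 1, 0 < (g z).re)
    (a : ℕ → ℂ)
    (ha : ∀ n : ℕ, 2 ≤ n → a n = ((A n : ℝ) : ℂ) / 2 * p (n - 1))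
    (m n : ℕ) (hm : 2 ≤ m) (hn : 2 ≤ n) :
    ‖a m * a n / (((A m * A n : ℝ)) : ℂ)
        - a (m + n - 1) / ((A (m + n - 1) : ℝ) : ℂ)‖ +
      ‖a m * a n‖ / (A m * A n) ≤ 1 := by
  have hApos : ∀ N : ℕ, 0 < A N := by
    intro N
    rw [hA N]
    apply div_pos
    · apply Finset.prod_pos
      intro i hi
      have h2i : 2 ≤ i := (Finset.mem_Icc.mp hi).1
      have h2i' : (2:ℝ) ≤ (i:ℝ) := by exact_mod_cast h2i
      linarith
    · exact_mod_cast Nat.factorial_pos N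
  have hm' : 2 ≤ m + n - 1 := by omega
  have hidx : m + n - 1 - 1 = (m-1) + (n-1) := by omega
  have h1 : ((A m : ℝ):ℂ) ≠ 0 := by
    simpa using (hApos m).ne'
  have h2 : ((A n : ℝ):ℂ) ≠ 0 := by
    simpa using (hApos n).ne'
  have h3 : ((A (m+n-1) : ℝ):ℂ) ≠ 0 := by
    simpa using (hApos (m+n-1)).ne'
  have e1 : a m * a n / (((A m * A n : ℝ)) : ℂ) = p (m-1) * p (n-1) / 4 := by
    rw [ha m hm, ha n hn]
    push_cast
    field_simp
    ring
  have e2 : a (m + n - 1) / ((A (m + n - 1) : ℝ) : ℂ) = p ((m-1) + (n-1)) / 2 := by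
    rw [ha _ hm', hidx]
    field_simp
  have e3 : ‖a m * a n‖ / (A m * A n) = ‖p (m-1) * p (n-1)‖ / 4 := by
    rw [ha m hm, ha n hn]
    rw [show ((A m : ℝ):ℂ)/2 * p (m-1) * (((A n : ℝ):ℂ)/2 * p (n-1))
        = (((A m * A n / 4 : ℝ)):ℂ) * (p (m-1) * p (n-1)) from by push_cast; ring]
    rw [norm_mul, Complex.norm_real, Real.norm_eq_abs,
      _root_.abs_of_pos (by have h4 := hApos m; have h5 := hApos n; positivity : (0:ℝ) < A m * A n / 4)]
    rw [div_eq_div_iff (by have h4 := hApos m; have h5 := hApos n; positivity) (by norm_num)]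
    ring
  rw [e1, e2, e3]
  exact core_ineq hp0 hsum hre (m-1) (n-1) (by omega) (by omega)
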